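/- arXiv:2407.03726 — 5 statements merged into one kernel-verified Lean document; each statement's English description precedes it below -/
import Mathlib

section
/- Let M be a proper metric space, y₀ an M-valued random element with f₂(p) = E[d(p,y₀)²] finite for some p* ∈ M. Then f₂ is finite and continuous on M and the Fréchet mean set argmin_{p∈M} f₂(p) is nonempty and compact. -/
open MeasureTheory

/-- On a proper metric space, if `f₂ p = E[d(p, y₀)²]` is finite at some point `p*`, then `f₂`
is finite and continuous on all of `M` and the Fréchet mean set (the set of global minimizers
of `f₂`) is nonempty and compact. -/
theorem frechetMeanSet_nonempty_compact {M Ω : Type*} [MetricSpace M] [ProperSpace M]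
    [MeasurableSpace M] [BorelSpace M] [MeasurableSpace Ω]
    (μ : Measure Ω) [IsProbabilityMeasure μ]
    (y₀ : Ω → M) (hy₀ : Measurable y₀)
    (pstar : M) (hfin : ∫⁻ ω, ENNReal.ofReal (dist pstar (y₀ ω) ^ 2) ∂μ ≠ ⊤)
    (f₂ : M → ℝ) (hf₂ : ∀ p, f₂ p = (∫⁻ ω, ENNReal.ofReal (dist p (y₀ ω) ^ 2) ∂μ).toReal) :
    (∀ p : M, ∫⁻ ω, ENNReal.ofReal (dist p (y₀ ω) ^ 2) ∂μ ≠ ⊤) ∧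
      Continuous f₂ ∧
      ({p : M | ∀ q : M, f₂ p ≤ f₂ q}).Nonempty ∧
      IsCompact {p : M | ∀ q : M, f₂ p ≤ f₂ q} := by
  -- measurability
  have hmeas : ∀ p : M, Measurable fun ω => dist p (y₀ ω) ^ 2 := fun p =>
    (measurable_const.dist hy₀).pow_const 2
  -- integrability of the squared distance, everywhere
  have hps : Integrable (fun ω => dist pstar (y₀ ω) ^ 2) μ := by
    refine ⟨(hmeas pstar).aestronglyMeasurable, ?_⟩
    rw [hasFiniteIntegral_iff_ofReal (Filter.Eventually.of_forall fun ω => sq_nonneg _)]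
    exact hfin.lt_top
  have hint : ∀ p : M, Integrable (fun ω => dist p (y₀ ω) ^ 2) μ := by
    intro p
    have hg : Integrable (fun ω => 2 * dist pstar (y₀ ω) ^ 2 + 2 * dist p pstar ^ 2) μ :=
      (hps.const_mul 2).add (integrable_const _)
    refine hg.mono' (hmeas p).aestronglyMeasurable
      (Filter.Eventually.of_forall fun ω => ?_)
    rw [Real.norm_of_nonneg (sq_nonneg _)]
    have h1 := dist_triangle p pstar (y₀ ω)
    have h2 : (0:ℝ) ≤ dist p pstar := dist_nonneg
    have h3 : (0:ℝ) ≤ dist pstar (y₀ ω) := dist_nonneg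
    have h4 : (0:ℝ) ≤ dist p (y₀ ω) := dist_nonneg
    nlinarith [mul_self_le_mul_self h4 h1, sq_nonneg (dist p pstar - dist pstar (y₀ ω))]
  -- finiteness of all lintegrals
  have hfinAll : ∀ p : M, ∫⁻ ω, ENNReal.ofReal (dist p (y₀ ω) ^ 2) ∂μ ≠ ⊤ := by
    intro p
    have h := (hint p).2
    rw [hasFiniteIntegral_iff_ofReal (Filter.Eventually.of_forall fun ω => sq_nonneg _)] at h
    exact h.ne
  -- f₂ as a Bochner integral
  have hf₂' : ∀ p, f₂ p = ∫ ω, dist p (y₀ ω) ^ 2 ∂μ := fun p => by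
    rw [hf₂ p, integral_eq_lintegral_of_nonneg_ae
      (Filter.Eventually.of_forall fun ω => sq_nonneg _) (hmeas p).aestronglyMeasurable]
  -- integrability of the distance itself
  have hintd : ∀ p : M, Integrable (fun ω => dist p (y₀ ω)) μ := by
    intro p
    have hg : Integrable (fun ω => dist p (y₀ ω) ^ 2 + 1) μ := (hint p).add (integrable_const 1)
    refine hg.mono' (measurable_const.dist hy₀).aestronglyMeasurable
      (Filter.Eventually.of_forall fun ω => ?_)
    rw [Real.norm_of_nonneg dist_nonneg]
    nlinarith [sq_nonneg (dist p (y₀ ω) - 1), dist_nonneg (x := p) (y := y₀ ω)]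
  have hA : ∀ p : M, 0 ≤ ∫ ω, dist p (y₀ ω) ∂μ := fun p =>
    integral_nonneg fun ω => dist_nonneg
  -- key quadratic comparison inequality
  have key : ∀ p q : M, f₂ q ≤ f₂ p + 2 * dist p q * (∫ ω, dist p (y₀ ω) ∂μ) + dist p q ^ 2 := by
    intro p q
    rw [hf₂' p, hf₂' q]
    have h1 : ∀ ω, dist q (y₀ ω) ^ 2 ≤
        dist p (y₀ ω) ^ 2 + 2 * dist p q * dist p (y₀ ω) + dist p q ^ 2 := by
      intro ω
      have h := dist_triangle q p (y₀ ω)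
      rw [dist_comm q p] at h
      nlinarith [mul_self_le_mul_self (dist_nonneg (x := q) (y := y₀ ω)) h]
    have hI1 : Integrable (fun ω => dist p (y₀ ω) ^ 2 + 2 * dist p q * dist p (y₀ ω)) μ :=
      (hint p).add ((hintd p).const_mul _)
    have hI : Integrable
        (fun ω => dist p (y₀ ω) ^ 2 + 2 * dist p q * dist p (y₀ ω) + dist p q ^ 2) μ :=
      hI1.add (integrable_const _)
    calc ∫ ω, dist q (y₀ ω) ^ 2 ∂μ
        ≤ ∫ ω, (dist p (y₀ ω) ^ 2 + 2 * dist p q * dist p (y₀ ω) + dist p q ^ 2) ∂μ :=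
          integral_mono (hint q) hI h1
      _ = (∫ ω, dist p (y₀ ω) ^ 2 ∂μ) + 2 * dist p q * (∫ ω, dist p (y₀ ω) ∂μ)
            + dist p q ^ 2 := by
          rw [integral_add hI1 (integrable_const _),
            integral_add (hint p) ((hintd p).const_mul _), integral_const_mul, integral_const]
          simp [measure_univ]
  -- mean distance is 1-Lipschitz
  have hAq : ∀ p q : M, ∫ ω, dist q (y₀ ω) ∂μ ≤ (∫ ω, dist p (y₀ ω) ∂μ) + dist p q := by
    intro p q
    have h1 : ∀ ω, dist q (y₀ ω) ≤ dist p (y₀ ω) + dist p q := fun ω => by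
      have h := dist_triangle q p (y₀ ω)
      rw [dist_comm q p] at h
      linarith
    have hI : Integrable (fun ω => dist p (y₀ ω) + dist p q) μ :=
      (hintd p).add (integrable_const _)
    have h2 := integral_mono (hintd q) hI h1
    rwa [integral_add (hintd p) (integrable_const _), integral_const, probReal_univ, one_smul] at h2
  -- continuity
  have hcont : Continuous f₂ := by
    rw [Metric.continuous_iff]
    intro p ε hε
    set A := ∫ ω, dist p (y₀ ω) ∂μ with hAdef
    have hApos : (0:ℝ) < 2 * A + 3 := by linarith [hA p]
    refine ⟨min 1 (ε / (2 * A + 3)), lt_min one_pos (div_pos hε hApos), fun q hq => ?_⟩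
    have hd0 : (0:ℝ) ≤ dist q p := dist_nonneg
    have hd1 : dist q p < 1 := lt_of_lt_of_le hq (min_le_left _ _)
    have hd2 : dist q p * (2 * A + 3) < ε := by
      have := lt_of_lt_of_le hq (min_le_right _ _)
      exact (lt_div_iff₀ hApos).mp this
    have k1 := key p q
    have k2 := key q p
    have hAqle := hAq p q
    have hpq : dist p q = dist q p := dist_comm p q
    rw [Real.dist_eq, abs_sub_lt_iff]
    constructor <;> nlinarith [hA q, hA p]
  -- coercivity: f₂ p ≥ dist p pstar ^ 2 / 2 - f₂ pstar
  have hcoer : ∀ p : M, dist p pstar ^ 2 / 2 - f₂ pstar ≤ f₂ p := by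
    intro p
    rw [hf₂' p, hf₂' pstar]
    have h1 : ∀ ω, dist p pstar ^ 2 / 2 - dist pstar (y₀ ω) ^ 2 ≤ dist p (y₀ ω) ^ 2 := by
      intro ω
      have h := dist_triangle p (y₀ ω) pstar
      rw [dist_comm (y₀ ω) pstar] at h
      nlinarith [mul_self_le_mul_self (dist_nonneg (x := p) (y := pstar)) h,
        sq_nonneg (dist p (y₀ ω) - dist pstar (y₀ ω))]
    have hI : Integrable (fun ω => dist p pstar ^ 2 / 2 - dist pstar (y₀ ω) ^ 2) μ :=
      (integrable_const _).sub hps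
    have h2 := integral_mono hI (hint p) h1
    rwa [integral_sub (integrable_const _) hps, integral_const, probReal_univ, one_smul] at h2
  have hf₂star_nonneg : 0 ≤ f₂ pstar := by
    rw [hf₂' pstar]; exact integral_nonneg fun ω => sq_nonneg _
  -- the sublevel set at pstar is compact
  set R : ℝ := Real.sqrt (4 * f₂ pstar) with hR
  set S : Set M := {p | f₂ p ≤ f₂ pstar} with hS
  have hSsub : S ⊆ Metric.closedBall pstar R := by
    intro p hp
    simp only [hS, Set.mem_setOf_eq] at hp
    have h1 := hcoer p
    have h2 : dist p pstar ^ 2 ≤ 4 * f₂ pstar := by linarith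
    have h3 : Real.sqrt (4 * f₂ pstar) ^ 2 = 4 * f₂ pstar :=
      Real.sq_sqrt (by linarith)
    have h4 : (0:ℝ) ≤ Real.sqrt (4 * f₂ pstar) := Real.sqrt_nonneg _
    simp only [Metric.mem_closedBall, hR]
    nlinarith [dist_nonneg (x := p) (y := pstar)]
  have hSclosed : IsClosed S := isClosed_le hcont continuous_const
  have hScompact : IsCompact S :=
    (isCompact_closedBall pstar R).of_isClosed_subset hSclosed hSsub
  have hpstarS : pstar ∈ S := show f₂ pstar ≤ f₂ pstar from le_rfl
  have hSne : S.Nonempty := ⟨pstar, hpstarS⟩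
  -- minimizer on S, which is a global minimizer
  obtain ⟨p₀, hp₀S, hp₀min⟩ := hScompact.exists_isMinOn hSne hcont.continuousOn
  have hglobal : ∀ q : M, f₂ p₀ ≤ f₂ q := by
    intro q
    by_cases hq : q ∈ S
    · exact isMinOn_iff.mp hp₀min q hq
    · exact le_trans (isMinOn_iff.mp hp₀min pstar hpstarS) (le_of_not_ge hq)
  -- the argmin set
  have hArgSub : {p : M | ∀ q : M, f₂ p ≤ f₂ q} ⊆ S := fun p hp => hp pstar
  have hArgClosed : IsClosed {p : M | ∀ q : M, f₂ p ≤ f₂ q} := by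
    have heq : {p : M | ∀ q : M, f₂ p ≤ f₂ q} = ⋂ q : M, {p : M | f₂ p ≤ f₂ q} := by
      ext p; simp
    rw [heq]
    exact isClosed_iInter fun q => isClosed_le hcont continuous_const
  exact ⟨hfinAll, hcont, ⟨p₀, hglobal⟩,
    hScompact.of_isClosed_subset hArgClosed hArgSub⟩
end

section
/- Let M be a metric space, y₀ an M-valued random element, α ∈ {1,2}, and p₀ a minimizer of f_α(p) = E[d(p,y₀)^α] with f_α(p₀) finite. Then for every p ∈ M, f_α(p) ≥ f_α(p₀) + d(p,p₀)^(α/2) · (d(p,p₀)^(α/2) − 2 f_α(p₀)^(1/2)). -/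
open MeasureTheory

private lemma frechet_key_pointwise (α : ℝ) (hα : α = 1 ∨ α = 2) {a b c : ℝ}
    (ha : 0 ≤ a) (hb : 0 ≤ b) (hc : 0 ≤ c) (h1 : b - c ≤ a) (h2 : c - b ≤ a) :
    b ^ α + c ^ α - 2 * (b ^ (α / 2) * c ^ (α / 2)) ≤ a ^ α := by
  rcases hα with rfl | rfl
  · rw [Real.rpow_one, Real.rpow_one, Real.rpow_one,
      show (1:ℝ)/2 = 1/2 from rfl, ← Real.sqrt_eq_rpow, ← Real.sqrt_eq_rpow]
    have hsb : Real.sqrt b ^ 2 = b := Real.sq_sqrt hb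
    have hsc : Real.sqrt c ^ 2 = c := Real.sq_sqrt hc
    have hsb0 := Real.sqrt_nonneg b
    have hsc0 := Real.sqrt_nonneg c
    rcases le_total (Real.sqrt c) (Real.sqrt b) with h | h <;> nlinarith
  · rw [show ((2:ℝ)/2) = 1 by norm_num, Real.rpow_one, Real.rpow_one,
      show a ^ (2:ℝ) = a ^ (2:ℕ) by rw [← Real.rpow_natCast]; norm_num,
      show b ^ (2:ℝ) = b ^ (2:ℕ) by rw [← Real.rpow_natCast]; norm_num,
      show c ^ (2:ℝ) = c ^ (2:ℕ) by rw [← Real.rpow_natCast]; norm_num]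
    rcases le_total c b with h | h <;> nlinarith

/-- Coercivity lower bound for the Fréchet function `f_α` around a minimizer `p₀`:
`f_α(p) ≥ f_α(p₀) + d(p,p₀)^(α/2) (d(p,p₀)^(α/2) − 2 √(f_α(p₀)))` for `α ∈ {1,2}`. -/
theorem frechet_coercivity {M Ω : Type*} [MetricSpace M]
    [MeasurableSpace M] [BorelSpace M] [MeasurableSpace Ω]
    (μ : Measure Ω) [IsProbabilityMeasure μ]
    (y₀ : Ω → M) (hy₀ : Measurable y₀)
    (α : ℝ) (hα : α = 1 ∨ α = 2) (p₀ : M)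
    (F : M → ENNReal)
    (hF : ∀ p, F p = ∫⁻ ω, ENNReal.ofReal (dist p (y₀ ω) ^ α) ∂μ)
    (hfin : F p₀ ≠ ⊤) (hmin : ∀ p, F p₀ ≤ F p) :
    ∀ p : M,
      ENNReal.ofReal ((F p₀).toReal +
        dist p p₀ ^ (α / 2) *
          (dist p p₀ ^ (α / 2) - 2 * Real.sqrt ((F p₀).toReal))) ≤ F p := by
  have hα0 : 0 < α := by rcases hα with rfl | rfl <;> norm_num
  -- auxiliary measurability / integrability facts
  have hmeas : ∀ (q : M) (β : ℝ), 0 ≤ β → Measurable fun ω => dist q (y₀ ω) ^ β := by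
    intro q β hβ
    exact (((Real.continuous_rpow_const hβ).comp
      (continuous_const.dist continuous_id)).measurable).comp hy₀
  have hint : ∀ q : M, F q ≠ ⊤ → Integrable (fun ω => dist q (y₀ ω) ^ α) μ := by
    intro q hq
    refine ⟨(hmeas q α hα0.le).aestronglyMeasurable, ?_⟩
    rw [hasFiniteIntegral_iff_ofReal (Filter.Eventually.of_forall fun ω => by positivity)]
    rw [hF q] at hq
    exact hq.lt_top
  have htoReal : ∀ q : M, (F q).toReal = ∫ ω, dist q (y₀ ω) ^ α ∂μ := by
    intro q
    rw [hF q, integral_eq_lintegral_of_nonneg_ae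
      (Filter.Eventually.of_forall fun ω => by positivity)
      (hmeas q α hα0.le).aestronglyMeasurable]
  intro p
  by_cases hFp : F p = ⊤
  · rw [hFp]; exact le_top
  set D := dist p p₀ with hD
  set f₀ := (F p₀).toReal with hf₀
  have hf₀nn : 0 ≤ f₀ := ENNReal.toReal_nonneg
  set c : Ω → ℝ := fun ω => dist p₀ (y₀ ω) with hc
  set h : Ω → ℝ := fun ω => c ω ^ (α / 2) with hh
  have hintc : Integrable (fun ω => c ω ^ α) μ := hint p₀ hfin
  have hinta : Integrable (fun ω => dist p (y₀ ω) ^ α) μ := hint p hFp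
  -- integrability of h
  have hbound : ∀ ω, h ω ≤ 1 + c ω ^ α := by
    intro ω
    rcases le_total (c ω) 1 with hw | hw
    · have : h ω ≤ 1 := Real.rpow_le_one dist_nonneg hw (by positivity)
      have : (0:ℝ) ≤ c ω ^ α := by positivity
      linarith [Real.rpow_le_one (dist_nonneg : (0:ℝ) ≤ c ω) hw
        (by positivity : (0:ℝ) ≤ α/2)]
    · have h1 : h ω ≤ c ω ^ α :=
        Real.rpow_le_rpow_of_exponent_le hw (by linarith)
      linarith
  have hinth : Integrable h μ := by
    refine Integrable.mono ((integrable_const (1:ℝ)).add hintc)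
      ((hmeas p₀ (α/2) (by positivity)).aestronglyMeasurable) ?_
    refine Filter.Eventually.of_forall fun ω => ?_
    have h0 : (0:ℝ) ≤ h ω := by positivity
    have h1 : (0:ℝ) ≤ 1 + c ω ^ α := by positivity
    simp only [Pi.add_apply]
    rw [Real.norm_eq_abs, Real.norm_eq_abs, abs_of_nonneg h0, abs_of_nonneg h1]
    exact hbound ω
  -- Cauchy–Schwarz: ∫ h ≤ √ f₀
  have hsq : ∀ ω, h ω ^ 2 = c ω ^ α := by
    intro ω
    rw [hh]
    simp only
    rw [sq, ← Real.rpow_add' dist_nonneg (by rw [show α/2 + α/2 = α by ring]; positivity)]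
    norm_num
    rfl
  have hmem : MemLp h 2 μ := by
    refine (memLp_two_iff_integrable_sq (hmeas p₀ (α/2) (by positivity)).aestronglyMeasurable).2 ?_
    have : (fun ω => h ω ^ 2) = fun ω => c ω ^ α := funext hsq
    simpa [Pi.pow_apply] using this ▸ hintc
  have hCS : ∫ ω, h ω ∂μ ≤ Real.sqrt f₀ := by
    have hvar := ProbabilityTheory.variance_nonneg h μ
    rw [ProbabilityTheory.variance_eq_sub hmem] at hvar
    have hEh2 : (∫ ω, (h ^ 2) ω ∂μ) = f₀ := by
      simp only [Pi.pow_apply, hsq]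
      rw [hf₀, htoReal p₀]
    have hEnn : 0 ≤ ∫ ω, h ω ∂μ :=
      integral_nonneg fun ω => by positivity
    rw [Real.le_sqrt hEnn hf₀nn]
    have : (∫ ω, h ω ∂μ) ^ 2 ≤ ∫ ω, (h ^ 2) ω ∂μ := by linarith
    linarith [hEh2 ▸ this]
  -- pointwise bound and integration
  have hptwise : ∀ ω, D ^ α + c ω ^ α - 2 * (D ^ (α/2) * h ω) ≤ dist p (y₀ ω) ^ α := by
    intro ω
    refine frechet_key_pointwise α hα dist_nonneg dist_nonneg dist_nonneg ?_ ?_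
    · have := dist_triangle p (y₀ ω) p₀
      have := dist_comm (y₀ ω) p₀
      simp only [hD, hc]
      linarith [dist_triangle p (y₀ ω) p₀, dist_comm (y₀ ω) p₀]
    · simp only [hD, hc]
      linarith [dist_triangle p₀ p (y₀ ω), dist_comm p₀ p]
  have hintLHS : Integrable (fun ω => D ^ α + c ω ^ α - 2 * (D ^ (α/2) * h ω)) μ := by
    exact ((integrable_const _).add hintc).sub ((hinth.const_mul _).const_mul 2)
  have hIntMono : ∫ ω, (D ^ α + c ω ^ α - 2 * (D ^ (α/2) * h ω)) ∂μ
      ≤ ∫ ω, dist p (y₀ ω) ^ α ∂μ :=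
    integral_mono hintLHS hinta hptwise
  have hIntLHS : ∫ ω, (D ^ α + c ω ^ α - 2 * (D ^ (α/2) * h ω)) ∂μ
      = D ^ α + f₀ - 2 * (D ^ (α/2) * ∫ ω, h ω ∂μ) := by
    have e1 : Integrable (fun ω => D ^ α + c ω ^ α) μ := (integrable_const _).add hintc
    have e2 : Integrable (fun ω => 2 * (D ^ (α/2) * h ω)) μ :=
      (hinth.const_mul _).const_mul 2
    rw [integral_sub e1 e2, integral_add (integrable_const _) hintc, integral_const]
    simp only [measure_univ, probReal_univ, ENNReal.toReal_one, smul_eq_mul, one_mul]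
    rw [integral_const_mul, integral_const_mul, hf₀, htoReal p₀]
  -- conclude
  rw [ENNReal.ofReal_le_iff_le_toReal hFp, htoReal p]
  have hDpow : D ^ (α/2) * D ^ (α/2) = D ^ α := by
    rw [← Real.rpow_add' dist_nonneg (by rw [show α/2 + α/2 = α by ring]; positivity)]
    norm_num
    rfl
  have hDnn : (0:ℝ) ≤ D ^ (α/2) := Real.rpow_nonneg dist_nonneg _
  have hmul : D ^ (α/2) * ∫ ω, h ω ∂μ ≤ D ^ (α/2) * Real.sqrt f₀ :=
    mul_le_mul_of_nonneg_left hCS hDnn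
  calc f₀ + D ^ (α/2) * (D ^ (α/2) - 2 * Real.sqrt f₀)
      = D ^ α + f₀ - 2 * (D ^ (α/2) * Real.sqrt f₀) := by rw [← hDpow]; ring
    _ ≤ D ^ α + f₀ - 2 * (D ^ (α/2) * ∫ ω, h ω ∂μ) := by linarith
    _ = ∫ ω, (D ^ α + c ω ^ α - 2 * (D ^ (α/2) * h ω)) ∂μ := hIntLHS.symm
    _ ≤ ∫ ω, dist p (y₀ ω) ^ α ∂μ := hIntMono
end

section
/- In a geodesic space M with data as above, a pair (p̄, γ̄) belongs to the weighted geodesic-regression L_α estimator set Ḡ^α if and only if γ̄(1) belongs to the weighted sample L_α estimator set Ā_T^α of the treated units and p̄ = γ̄(0) belongs to the weighted sample L_α estimator set Ā_C^α of the control units. -/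
/-- A geodesic of maximal domain in a metric space, with domain containing 0 and 1:
locally, `d(γ t₁, γ t₂) = u_γ |t₂ − t₁|` where `u_γ ≥ 0` is the speed. -/
structure Geod (M : Type*) [MetricSpace M] where
  dom : Set ℝ
  map : ℝ → M
  speed : ℝ
  speed_nonneg : 0 ≤ speed
  zero_mem : (0 : ℝ) ∈ dom
  one_mem : (1 : ℝ) ∈ dom
  locIso : ∀ t ∈ dom, ∃ ε > 0, ∀ t₁ ∈ dom, ∀ t₂ ∈ dom,
    |t₁ - t| < ε → |t₂ - t| < ε → dist (map t₁) (map t₂) = speed * |t₂ - t₁|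

/-- In a geodesic space, a pair `(p̄, gbar)` with `p̄ = gbar(0)` minimizes the weighted
geodesic-regression objective `Q` iff `gbar(1)` is a weighted sample `L_α` estimator of the
treated units and `gbar(0)` is a weighted sample `L_α` estimator of the control units. -/
theorem mem_geodesic_regression_iff {M : Type*} [MetricSpace M]
    (hgeo : ∀ p q : M, ∃ γ : Geod M, γ.map 0 = p ∧ γ.map 1 = q ∧ γ.speed = dist p q ∧
      ∀ t₁ ∈ γ.dom, ∀ t₂ ∈ γ.dom, dist (γ.map t₁) (γ.map t₂) = γ.speed * |t₂ - t₁|)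
    (α : ℝ) (hα : α = 1 ∨ α = 2)
    (n : ℕ) (z : Fin n → ℝ) (hz : ∀ i, z i = 0 ∨ z i = 1)
    (r : Fin n → M) (wT wC : Fin n → ℝ)
    (hwT0 : ∀ i, 0 ≤ wT i) (hwC0 : ∀ i, 0 ≤ wC i)
    (hwTsupp : ∀ i, z i = 0 → wT i = 0) (hwCsupp : ∀ i, z i = 1 → wC i = 0)
    (hwT1 : ∑ i, wT i = 1) (hwC1 : ∑ i, wC i = 1)
    (βT βC : ℝ) (hβT : βT ∈ Set.Ioo (0 : ℝ) 1) (hβC : βC ∈ Set.Ioo (0 : ℝ) 1)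
    (hβ : βT + βC = 1)
    (hAT : ∃ p : M, ∀ q : M, ∑ i, wT i * dist p (r i) ^ α ≤ ∑ i, wT i * dist q (r i) ^ α)
    (hAC : ∃ p : M, ∀ q : M, ∑ i, wC i * dist p (r i) ^ α ≤ ∑ i, wC i * dist q (r i) ^ α)
    (gbar : Geod M) :
    (∀ γ' : Geod M,
        ∑ i, (βT * wT i + βC * wC i) * dist (gbar.map (z i)) (r i) ^ α
          ≤ ∑ i, (βT * wT i + βC * wC i) * dist (γ'.map (z i)) (r i) ^ α)
      ↔ ((∀ q : M, ∑ i, wT i * dist (gbar.map 1) (r i) ^ α ≤ ∑ i, wT i * dist q (r i) ^ α) ∧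
         (∀ q : M, ∑ i, wC i * dist (gbar.map 0) (r i) ^ α ≤ ∑ i, wC i * dist q (r i) ^ α)) := by

  have key : ∀ γ : Geod M,
      ∑ i, (βT * wT i + βC * wC i) * dist (γ.map (z i)) (r i) ^ α
        = βT * ∑ i, wT i * dist (γ.map 1) (r i) ^ α
          + βC * ∑ i, wC i * dist (γ.map 0) (r i) ^ α := by
    intro γ
    rw [Finset.mul_sum, Finset.mul_sum, ← Finset.sum_add_distrib]
    apply Finset.sum_congr rfl
    intro i _
    rcases hz i with h | h
    · rw [h, hwTsupp i h]; ring
    · rw [h, hwCsupp i h]; ring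
  constructor
  · intro hmin
    constructor
    · intro q
      obtain ⟨γ, h0, h1, -, -⟩ := hgeo (gbar.map 0) q
      have h := hmin γ
      rw [key, key, h0, h1] at h
      nlinarith [hβT.1]
    · intro q
      obtain ⟨γ, h0, h1, -, -⟩ := hgeo q (gbar.map 1)
      have h := hmin γ
      rw [key, key, h0, h1] at h
      nlinarith [hβC.1]
  · rintro ⟨hT, hC⟩ γ
    rw [key, key]
    have h1 := hT (γ.map 1)
    have h2 := hC (γ.map 0)
    nlinarith [hβT.1, hβC.1]
end

section
/- Let M be a proper metric space, α ∈ {1,2}, and suppose the random functions f̂_{α,N} and the deterministic limit f_α satisfy: (i) f̂_{α,N}(p) → f_α(p) almost surely for each fixed p, (ii) f̂_{α/2,N}(p₀) → f_{α/2}(p₀) almost surely for a fixed p₀, with all these quantities finite, and f_α is continuous. Then for any compact K ⊂ M, sup_{p ∈ K} |f̂_{α,N}(p) − f_α(p)| → 0 almost surely. -/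
open MeasureTheory Filter Metric

/-- Core deterministic lemma: equi-Lipschitz (near `K`) sequence converging pointwise on a
dense set to a continuous function converges uniformly on the compact set `K`. -/
lemma frechet_core {M : Type*} [MetricSpace M] [ProperSpace M]
    (K : Set M) (hK : IsCompact K)
    (D : Set M) (hDd : Dense D)
    (g : ℕ → M → ℝ) (f : M → ℝ) (hf : Continuous f)
    (C : ℝ) (hC : 0 ≤ C)
    (hlip : ∀ N p q, p ∈ K → dist p q ≤ 1 → |g N p - g N q| ≤ C * dist p q)
    (hconv : ∀ p ∈ D, Tendsto (fun N => g N p) atTop (nhds (f p)))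
    (ε : ℝ) (hε : 0 < ε) :
    ∀ᶠ N in atTop, ∀ p ∈ K, |g N p - f p| ≤ ε := by
  -- uniform continuity of f on the 1-thickening of K
  have hK1 : IsCompact (cthickening 1 K) := hK.cthickening
  have huc : UniformContinuousOn f (cthickening 1 K) :=
    hK1.uniformContinuousOn_of_continuous hf.continuousOn
  rw [Metric.uniformContinuousOn_iff] at huc
  obtain ⟨δ₁, hδ₁, hδ₁'⟩ := huc (ε / 3) (by linarith)
  set δ : ℝ := min (min δ₁ 1) (ε / (3 * (C + 1))) with hδdef
  have hδpos : 0 < δ := by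
    apply lt_min (lt_min hδ₁ one_pos)
    positivity
  have hδ1 : δ ≤ 1 := le_trans (min_le_left _ _) (min_le_right _ _)
  have hδδ₁ : δ ≤ δ₁ := le_trans (min_le_left _ _) (min_le_left _ _)
  have hδC : C * δ ≤ ε / 3 := by
    have h1 : δ ≤ ε / (3 * (C + 1)) := min_le_right _ _
    have h2 : C * δ ≤ C * (ε / (3 * (C + 1))) := mul_le_mul_of_nonneg_left h1 hC
    have h3 : C * (ε / (3 * (C + 1))) ≤ ε / 3 := by
      have hpos : (0:ℝ) < 3 * (C + 1) := by positivity
      have key : ε / (3 * (C + 1)) * (3 * (C + 1)) = ε := div_mul_cancel₀ _ (ne_of_gt hpos)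
      nlinarith [div_nonneg hε.le hpos.le]
    linarith
  -- finite subcover by balls around dense points
  have hcover : K ⊆ ⋃ q : D, ball (q : M) δ := by
    intro p _
    obtain ⟨q, hq, hq'⟩ := hDd.exists_dist_lt p hδpos
    exact Set.mem_iUnion.2 ⟨⟨q, hq⟩, by simpa [dist_comm] using hq'⟩
  obtain ⟨T, hT⟩ := hK.elim_finite_subcover (fun q : D => ball (q : M) δ)
    (fun q => isOpen_ball) hcover
  -- eventual closeness at the net points
  have hev : ∀ᶠ N in atTop, ∀ q ∈ T, |g N (q : M) - f (q : M)| < ε / 3 := by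
    rw [Filter.eventually_all_finset]
    intro q _
    have := (hconv (q : M) q.2)
    have h := Metric.tendsto_atTop.mp this (ε / 3) (by linarith)
    obtain ⟨N₀, hN₀⟩ := h
    refine Filter.eventually_atTop.2 ⟨N₀, fun n hn => ?_⟩
    simpa [Real.dist_eq] using hN₀ n hn
  filter_upwards [hev] with N hN p hp
  obtain ⟨q, hq, hpq⟩ := Set.mem_iUnion₂.1 (hT hp)
  have hdpq : dist p (q : M) < δ := mem_ball.1 hpq
  have h1 : |g N p - g N (q : M)| ≤ ε / 3 := by
    calc |g N p - g N (q : M)| ≤ C * dist p (q : M) :=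
          hlip N p q hp (le_trans hdpq.le hδ1)
      _ ≤ C * δ := mul_le_mul_of_nonneg_left hdpq.le hC
      _ ≤ ε / 3 := hδC
  have h2 : |g N (q : M) - f (q : M)| < ε / 3 := hN q hq
  have h3 : |f (q : M) - f p| < ε / 3 := by
    have hpK1 : p ∈ cthickening 1 K := self_subset_cthickening K hp
    have hqK1 : (q : M) ∈ cthickening 1 K :=
      mem_cthickening_of_dist_le (q : M) p 1 K hp (by rw [dist_comm]; linarith)
    have := hδ₁' (q : M) hqK1 p hpK1 (by rw [dist_comm]; exact lt_of_lt_of_le hdpq hδδ₁)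
    simpa [Real.dist_eq] using this
  calc |g N p - f p| ≤ |g N p - g N (q : M)| + |g N (q : M) - f (q : M)| + |f (q : M) - f p| := by
        have := abs_sub_le (g N p) (g N (q : M)) (f p)
        have := abs_sub_le (g N (q : M)) (f (q : M)) (f p)
        have := abs_sub_le (g N p) (g N (q:M)) (f p)
        calc |g N p - f p| ≤ |g N p - g N (q:M)| + |g N (q:M) - f p| := abs_sub_le _ _ _
          _ ≤ |g N p - g N (q:M)| + (|g N (q:M) - f (q:M)| + |f (q:M) - f p|) := by
              linarith [abs_sub_le (g N (q:M)) (f (q:M)) (f p)]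
          _ = _ := by ring
    _ ≤ ε / 3 + ε / 3 + ε / 3 := by linarith
    _ = ε := by ring

/-- From the eventual ε-bound form to convergence of the supremum. -/
lemma sup_tendsto_zero {M : Type*} [MetricSpace M] (K : Set M)
    (g : ℕ → M → ℝ) (f : M → ℝ)
    (h : ∀ ε : ℝ, 0 < ε → ∀ᶠ N in atTop, ∀ p ∈ K, |g N p - f p| ≤ ε) :
    Tendsto (fun N => ⨆ p : K, |g N (p : M) - f p|) atTop (nhds 0) := by
  rw [Metric.tendsto_atTop]
  intro ε hε
  obtain ⟨N₀, hN₀⟩ := Filter.eventually_atTop.1 (h (ε / 2) (by linarith))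
  refine ⟨N₀, fun n hn => ?_⟩
  have hb : (⨆ p : K, |g n (p : M) - f p|) ≤ ε / 2 :=
    Real.iSup_le (fun p => hN₀ n hn p p.2) (by linarith)
  have hnn : 0 ≤ ⨆ p : K, |g n (p : M) - f p| :=
    Real.iSup_nonneg (fun p => abs_nonneg _)
  rw [Real.dist_eq, sub_zero, abs_of_nonneg hnn]
  linarith

/-- Uniform a.s. convergence of weighted empirical Fréchet functionals over compact sets:
pointwise a.s. convergence of `f̂_{α,N}` to a continuous `f_α`, together with a.s. convergence
of `f̂_{α/2,N}(p₀)`, implies `sup_{p∈K} |f̂_{α,N}(p) − f_α(p)| → 0` a.s. for every compact `K`. -/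
theorem empirical_frechet_unif_tendsto {Ω M : Type*} [MeasurableSpace Ω]
    [MetricSpace M] [ProperSpace M]
    (μ : Measure Ω) [IsProbabilityMeasure μ]
    (α : ℝ) (hα : α = 1 ∨ α = 2)
    (y : ℕ → Ω → M) (w : ℕ → ℕ → Ω → ℝ)
    (hw0 : ∀ N i ω, 0 ≤ w N i ω)
    (hw1 : ∀ N ω, ∑ i ∈ Finset.range N, w N i ω = 1)
    (fα : M → ℝ) (hcont : Continuous fα)
    (hpt : ∀ p : M, ∀ᵐ ω ∂μ,
      Tendsto (fun N => ∑ i ∈ Finset.range N, w N i ω * dist p (y i ω) ^ α)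
        atTop (nhds (fα p)))
    (p₀ : M) (fhalf : ℝ)
    (hhalf : ∀ᵐ ω ∂μ,
      Tendsto (fun N => ∑ i ∈ Finset.range N, w N i ω * dist p₀ (y i ω) ^ (α / 2))
        atTop (nhds fhalf)) :
    ∀ K : Set M, IsCompact K →
      ∀ᵐ ω ∂μ, Tendsto
        (fun N => ⨆ p : K,
          |(∑ i ∈ Finset.range N, w N i ω * dist (p : M) (y i ω) ^ α) - fα p|)
        atTop (nhds 0) := by
  intro K hK
  obtain ⟨D, hDc, hDd⟩ := TopologicalSpace.exists_countable_dense M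
  have hD : ∀ᵐ ω ∂μ, ∀ p ∈ D,
      Tendsto (fun N => ∑ i ∈ Finset.range N, w N i ω * dist p (y i ω) ^ α)
        atTop (nhds (fα p)) := (ae_ball_iff hDc).mpr (fun p _ => hpt p)
  rcases hα with rfl | rfl
  · -- α = 1 : the empirical functionals are 1-Lipschitz
    filter_upwards [hD] with ω hω
    set g : ℕ → M → ℝ := fun N x => ∑ i ∈ Finset.range N, w N i ω * dist x (y i ω) ^ (1:ℝ)
      with hg
    have hlip : ∀ N p q, p ∈ K → dist p q ≤ 1 → |g N p - g N q| ≤ 1 * dist p q := by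
      intro N p q _ _
      rw [one_mul, hg]
      simp only [Real.rpow_one]
      rw [← Finset.sum_sub_distrib]
      calc |∑ i ∈ Finset.range N, (w N i ω * dist p (y i ω) - w N i ω * dist q (y i ω))|
          ≤ ∑ i ∈ Finset.range N, |w N i ω * dist p (y i ω) - w N i ω * dist q (y i ω)| :=
            Finset.abs_sum_le_sum_abs _ _
        _ ≤ ∑ i ∈ Finset.range N, w N i ω * dist p q := by
            refine Finset.sum_le_sum (fun i _ => ?_)
            rw [← mul_sub, abs_mul, abs_of_nonneg (hw0 N i ω)]
            exact mul_le_mul_of_nonneg_left (abs_dist_sub_le _ _ _) (hw0 N i ω)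
        _ = dist p q := by rw [← Finset.sum_mul, hw1 N ω, one_mul]
    exact sup_tendsto_zero K g fα (fun ε hε =>
      frechet_core K hK D hDd g fα hcont 1 zero_le_one hlip (fun p hp => hω p hp) ε hε)
  · -- α = 2
    have hhalf' : ∀ᵐ ω ∂μ,
        Tendsto (fun N => ∑ i ∈ Finset.range N, w N i ω * dist p₀ (y i ω))
          atTop (nhds fhalf) := by
      have : (2:ℝ) / 2 = 1 := by norm_num
      simpa [this, Real.rpow_one] using hhalf
    filter_upwards [hD, hhalf'] with ω hω hS
    set g : ℕ → M → ℝ := fun N x => ∑ i ∈ Finset.range N, w N i ω * dist x (y i ω) ^ (2:ℝ)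
      with hg
    set S : ℕ → ℝ := fun N => ∑ i ∈ Finset.range N, w N i ω * dist p₀ (y i ω) with hSdef
    obtain ⟨C₀, hC₀⟩ := hS.bddAbove_range
    have hSC : ∀ N, S N ≤ C₀ := fun N => hC₀ ⟨N, rfl⟩
    have hC₀0 : 0 ≤ C₀ := by
      have := hSC 0
      simpa [hSdef] using this
    obtain ⟨R, hR⟩ := hK.isBounded.subset_closedBall p₀
    set R' : ℝ := max R 0 with hR'def
    have hR'0 : 0 ≤ R' := le_max_right _ _
    have hRK : ∀ p ∈ K, dist p p₀ ≤ R' := fun p hp =>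
      le_trans (Metric.mem_closedBall.1 (hR hp)) (le_max_left _ _)
    set C : ℝ := 2 * C₀ + 2 * R' + 1 with hCdef
    have hC : 0 ≤ C := by positivity
    have hlip : ∀ N p q, p ∈ K → dist p q ≤ 1 → |g N p - g N q| ≤ C * dist p q := by
      intro N p q hp hpq
      rw [hg]
      simp only [Real.rpow_two]
      rw [← Finset.sum_sub_distrib]
      have step2 : ∀ i ∈ Finset.range N,
          |w N i ω * dist p (y i ω) ^ 2 - w N i ω * dist q (y i ω) ^ 2|
            ≤ w N i ω * (dist p q * (2 * dist p₀ (y i ω) + (2 * R' + 1))) := by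
        intro i _
        have ha : dist p (y i ω) ≤ R' + dist p₀ (y i ω) := by
          have h1 := dist_triangle p p₀ (y i ω)
          have h2 := hRK p hp
          linarith
        have hb : dist q (y i ω) ≤ 1 + R' + dist p₀ (y i ω) := by
          have h1 := dist_triangle q p (y i ω)
          have h2 : dist q p ≤ 1 := by rw [dist_comm]; exact hpq
          linarith
        have habs : |dist p (y i ω) - dist q (y i ω)| ≤ dist p q := abs_dist_sub_le _ _ _
        have hfac : |dist p (y i ω) ^ 2 - dist q (y i ω) ^ 2|
            = |dist p (y i ω) - dist q (y i ω)| * (dist p (y i ω) + dist q (y i ω)) := by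
          rw [← abs_of_nonneg (by positivity : (0:ℝ) ≤ dist p (y i ω) + dist q (y i ω)),
            ← abs_mul]
          congr 1; ring
        have hkey : |dist p (y i ω) ^ 2 - dist q (y i ω) ^ 2|
            ≤ dist p q * (2 * dist p₀ (y i ω) + (2 * R' + 1)) := by
          rw [hfac]
          exact mul_le_mul habs (by linarith) (by positivity) dist_nonneg
        rw [← mul_sub, abs_mul, abs_of_nonneg (hw0 N i ω)]
        exact mul_le_mul_of_nonneg_left hkey (hw0 N i ω)
      calc |∑ i ∈ Finset.range N,
            (w N i ω * dist p (y i ω) ^ 2 - w N i ω * dist q (y i ω) ^ 2)|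
          ≤ ∑ i ∈ Finset.range N,
            |w N i ω * dist p (y i ω) ^ 2 - w N i ω * dist q (y i ω) ^ 2| :=
            Finset.abs_sum_le_sum_abs _ _
        _ ≤ ∑ i ∈ Finset.range N,
            w N i ω * (dist p q * (2 * dist p₀ (y i ω) + (2 * R' + 1))) :=
            Finset.sum_le_sum step2
        _ = (2 * dist p q) * S N + (dist p q * (2 * R' + 1)) * 1 := by
            rw [Finset.sum_congr rfl (fun i _ => by
              ring : ∀ i ∈ Finset.range N,
                w N i ω * (dist p q * (2 * dist p₀ (y i ω) + (2 * R' + 1)))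
                  = (2 * dist p q) * (w N i ω * dist p₀ (y i ω))
                    + (dist p q * (2 * R' + 1)) * w N i ω)]
            rw [Finset.sum_add_distrib, ← Finset.mul_sum, ← Finset.mul_sum, hw1 N ω, hSdef]
        _ ≤ C * dist p q := by
            have h1 : (2 * dist p q) * S N ≤ (2 * dist p q) * C₀ :=
              mul_le_mul_of_nonneg_left (hSC N) (by positivity)
            rw [hCdef]
            nlinarith [dist_nonneg (x := p) (y := q)]
    exact sup_tendsto_zero K g fα (fun ε hε =>
      frechet_core K hK D hDd g fα hcont C hC hlip (fun p hp => hω p hp) ε hε)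
end

section
/- Let M = S² ⊂ ℝ³ with the geodesic (great-circle) distance, p = (0,0,1) the north pole, and c ∈ (0, π/2). Consider the three points a₁ = (sin c, 0, cos c), a₂ = (−(sin c)/2, (√3/2) sin c, cos c), a₃ = (−(sin c)/2, −(√3/2) sin c, cos c), each at geodesic distance c from p. Then p is the unique Fréchet mean of the uniform distribution on {a₁, a₂, a₃}, i.e., p uniquely minimizes q ↦ (1/3) Σ_{i=1}^3 d(q, a_i)² over S². -/
open Real

lemma sphere_tangent_aux (c : ℝ) (hc0 : 0 < c) (hc2 : c < π / 2) :
    ∀ t : ℝ, -1 ≤ t → t ≤ 1 →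
      c ^ 2 * sin c + 2 * c * (cos c - t) ≤ (arccos t) ^ 2 * sin c := by
  have hπ : c < π := lt_trans hc2 (by linarith [pi_pos])
  have hcne : c ≠ 0 := hc0.ne'
  have hconc := strictConcaveOn_sin_Icc.concaveOn
  -- sign of ψ θ = θ sin c - c sin θ
  have hψle : ∀ θ ∈ Set.Icc (0:ℝ) c, θ * sin c ≤ c * sin θ := by
    intro θ hθ
    have hb : 0 ≤ θ / c := div_nonneg hθ.1 hc0.le
    have ha : 0 ≤ 1 - θ / c := by
      have : θ / c ≤ 1 := (div_le_one hc0).2 hθ.2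
      linarith
    have h := hconc.2 (Set.mem_Icc.2 ⟨le_rfl, pi_pos.le⟩)
      (Set.mem_Icc.2 ⟨hc0.le, hπ.le⟩) ha hb (by ring)
    have hbc : θ / c * c = θ := div_mul_cancel₀ θ hcne
    simp only [smul_eq_mul, mul_zero, Real.sin_zero, zero_add, hbc] at h
    have h2 := mul_le_mul_of_nonneg_left h hc0.le
    have h3 : c * (θ / c * sin c) = θ * sin c := by field_simp
    linarith
  have hψge : ∀ θ ∈ Set.Icc c π, c * sin θ ≤ θ * sin c := by
    intro θ hθ
    have hθ0 : 0 < θ := lt_of_lt_of_le hc0 hθ.1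
    have hb : 0 ≤ c / θ := div_nonneg hc0.le hθ0.le
    have ha : 0 ≤ 1 - c / θ := by
      have : c / θ ≤ 1 := (div_le_one hθ0).2 hθ.1
      linarith
    have h := hconc.2 (Set.mem_Icc.2 ⟨le_rfl, pi_pos.le⟩)
      (Set.mem_Icc.2 ⟨hθ0.le, hθ.2⟩) ha hb (by ring)
    have hbc : c / θ * θ = c := div_mul_cancel₀ c hθ0.ne'
    simp only [smul_eq_mul, mul_zero, Real.sin_zero, zero_add, hbc] at h
    have h2 := mul_le_mul_of_nonneg_left h hθ0.le
    have h3 : θ * (c / θ * sin θ) = c * sin θ := by field_simp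
    linarith
  -- φ θ = θ² sin c + 2 c cos θ has derivative 2 θ sin c - 2 c sin θ
  have hd : ∀ x : ℝ, HasDerivAt (fun θ : ℝ => θ ^ 2 * sin c + 2 * c * cos θ)
      (2 * x * sin c - 2 * c * sin x) x := by
    intro x
    have h1 := (hasDerivAt_pow 2 x).mul_const (sin c)
    have h2 := (Real.hasDerivAt_cos x).const_mul (2 * c)
    have h3 := h1.add h2
    have h4 : (2 * x * sin c - 2 * c * sin x) = ((2:ℕ):ℝ) * x ^ (2 - 1) * sin c + 2 * c * -sin x := by
      push_cast
      ring
    rw [h4]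
    exact h3
  have hcont : Continuous (fun θ : ℝ => θ ^ 2 * sin c + 2 * c * cos θ) := by continuity
  have hφanti : AntitoneOn (fun θ : ℝ => θ ^ 2 * sin c + 2 * c * cos θ) (Set.Icc 0 c) := by
    apply antitoneOn_of_deriv_nonpos (convex_Icc 0 c) hcont.continuousOn
    · intro x _
      exact (hd x).differentiableAt.differentiableWithinAt
    · intro x hx
      rw [interior_Icc] at hx
      rw [(hd x).deriv]
      have := hψle x ⟨hx.1.le, hx.2.le⟩
      linarith
  have hφmono : MonotoneOn (fun θ : ℝ => θ ^ 2 * sin c + 2 * c * cos θ) (Set.Icc c π) := by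
    apply monotoneOn_of_deriv_nonneg (convex_Icc c π) hcont.continuousOn
    · intro x _
      exact (hd x).differentiableAt.differentiableWithinAt
    · intro x hx
      rw [interior_Icc] at hx
      rw [(hd x).deriv]
      have := hψge x ⟨hx.1.le, hx.2.le⟩
      linarith
  have hmin : ∀ θ ∈ Set.Icc (0:ℝ) π,
      c ^ 2 * sin c + 2 * c * cos c ≤ θ ^ 2 * sin c + 2 * c * cos θ := by
    intro θ hθ
    rcases le_total θ c with h | h
    · have := hφanti ⟨hθ.1, h⟩ ⟨hc0.le, le_rfl⟩ h
      simpa using this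
    · have := hφmono ⟨le_rfl, hπ.le⟩ ⟨h, hθ.2⟩ h
      simpa using this
  intro t ht1 ht2
  have hθmem : arccos t ∈ Set.Icc (0:ℝ) π := ⟨Real.arccos_nonneg t, Real.arccos_le_pi t⟩
  have h := hmin (arccos t) hθmem
  rw [Real.cos_arccos ht1 ht2] at h
  linarith


lemma sq_le_one_bounds (x : ℝ) (h : x ^ 2 ≤ 1) : -1 ≤ x ∧ x ≤ 1 :=
  ⟨by nlinarith [sq_nonneg (x + 1)], by nlinarith [sq_nonneg (x - 1)]⟩

lemma cs_two_aux (u v s co : ℝ) (h : u ^ 2 + v ^ 2 ≤ 1) (hp : s ^ 2 + co ^ 2 = 1) :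
    (u * s + v * co) ^ 2 ≤ 1 := by
  nlinarith [sq_nonneg (u * co - v * s)]

lemma coord1_aux (x y z : ℝ) (h : x ^ 2 + y ^ 2 + z ^ 2 = 1) :
    x ^ 2 + z ^ 2 ≤ 1 := by nlinarith [sq_nonneg y]

lemma coord2_aux (x y z r : ℝ) (h : x ^ 2 + y ^ 2 + z ^ 2 = 1) (hr : r ^ 2 = 3) :
    (-x / 2 + r / 2 * y) ^ 2 + z ^ 2 ≤ 1 := by
  nlinarith [sq_nonneg (r / 2 * x + y / 2)]

lemma coord3_aux (x y z r : ℝ) (h : x ^ 2 + y ^ 2 + z ^ 2 = 1) (hr : r ^ 2 = 3) :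
    (-x / 2 - r / 2 * y) ^ 2 + z ^ 2 ≤ 1 := by
  nlinarith [sq_nonneg (r / 2 * x - y / 2)]

lemma last_coord_le_one (x y z : ℝ) (h : x ^ 2 + y ^ 2 + z ^ 2 = 1) : z ≤ 1 := by
  nlinarith [sq_nonneg x, sq_nonneg y, sq_nonneg (z - 1)]

set_option maxHeartbeats 800000 in
/-- The north pole `p` is the unique Fréchet mean (for the great-circle distance
`d(x,y) = arccos⟨x,y⟩`) of the uniform distribution on the three symmetric points
`a₁, a₂, a₃` at colatitude `c ∈ (0, π/2)` on the unit sphere `S²`. -/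
theorem north_pole_unique_frechet_mean (c : ℝ) (hc : c ∈ Set.Ioo 0 (π / 2))
    (p a₁ a₂ a₃ : Fin 3 → ℝ)
    (hp : p = ![0, 0, 1])
    (h1 : a₁ = ![sin c, 0, cos c])
    (h2 : a₂ = ![-(sin c) / 2, (Real.sqrt 3 / 2) * sin c, cos c])
    (h3 : a₃ = ![-(sin c) / 2, -((Real.sqrt 3 / 2) * sin c), cos c])
    (F : (Fin 3 → ℝ) → ℝ)
    (hF : ∀ q, F q = (1 / 3) *
      ((arccos (∑ i, q i * a₁ i)) ^ 2 + (arccos (∑ i, q i * a₂ i)) ^ 2 +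
        (arccos (∑ i, q i * a₃ i)) ^ 2)) :
    ∀ q : Fin 3 → ℝ, (∑ i, q i ^ 2) = 1 → F p ≤ F q ∧ (F q = F p → q = p) := by
  obtain ⟨hc0, hc2⟩ := hc
  have hπ : c < π := lt_trans hc2 (by linarith [pi_pos])
  have hs : 0 < sin c := Real.sin_pos_of_pos_of_lt_pi hc0 hπ
  have hco : 0 < cos c := Real.cos_pos_of_mem_Ioo ⟨by linarith [pi_pos], hc2⟩
  have hsq3 : Real.sqrt 3 ^ 2 = 3 := Real.sq_sqrt (by norm_num)
  have hpyth := Real.sin_sq_add_cos_sq c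
  have hFp : F p = c ^ 2 := by
    rw [hF]
    have s1 : (∑ i, p i * a₁ i) = cos c := by
      rw [hp, h1]; simp [Fin.sum_univ_three]
    have s2 : (∑ i, p i * a₂ i) = cos c := by
      rw [hp, h2]; simp [Fin.sum_univ_three]
    have s3 : (∑ i, p i * a₃ i) = cos c := by
      rw [hp, h3]; simp [Fin.sum_univ_three]
    rw [s1, s2, s3, Real.arccos_cos hc0.le hπ.le]
    ring
  intro q hq
  have hq' : q 0 ^ 2 + q 1 ^ 2 + q 2 ^ 2 = 1 := by
    simpa [Fin.sum_univ_three] using hq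
  have e1 : (∑ i, q i * a₁ i) = q 0 * sin c + q 2 * cos c := by
    rw [h1]; simp [Fin.sum_univ_three]
  have e2 : (∑ i, q i * a₂ i)
      = (-(q 0) / 2 + Real.sqrt 3 / 2 * q 1) * sin c + q 2 * cos c := by
    rw [h2]; simp [Fin.sum_univ_three]; ring
  have e3 : (∑ i, q i * a₃ i)
      = (-(q 0) / 2 - Real.sqrt 3 / 2 * q 1) * sin c + q 2 * cos c := by
    rw [h3]; simp [Fin.sum_univ_three]; ring
  set t1 := q 0 * sin c + q 2 * cos c with ht1def
  set t2 := (-(q 0) / 2 + Real.sqrt 3 / 2 * q 1) * sin c + q 2 * cos c with ht2def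
  set t3 := (-(q 0) / 2 - Real.sqrt 3 / 2 * q 1) * sin c + q 2 * cos c with ht3def
  -- Cauchy-Schwarz type bounds
  have hs1 : t1 ^ 2 ≤ 1 := by
    rw [ht1def]
    exact cs_two_aux _ _ _ _ (coord1_aux _ _ _ hq') hpyth
  have hs2 : t2 ^ 2 ≤ 1 := by
    rw [ht2def]
    exact cs_two_aux _ _ _ _ (coord2_aux _ _ _ _ hq' hsq3) hpyth
  have hs3' : t3 ^ 2 ≤ 1 := by
    rw [ht3def]
    exact cs_two_aux _ _ _ _ (coord3_aux _ _ _ _ hq' hsq3) hpyth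
  have hb1 := sq_le_one_bounds t1 hs1
  have hb2 := sq_le_one_bounds t2 hs2
  have hb3 := sq_le_one_bounds t3 hs3'
  have k1 := sphere_tangent_aux c hc0 hc2 t1 hb1.1 hb1.2
  have k2 := sphere_tangent_aux c hc0 hc2 t2 hb2.1 hb2.2
  have k3 := sphere_tangent_aux c hc0 hc2 t3 hb3.1 hb3.2
  have hq2le : q 2 ≤ 1 := last_coord_le_one _ _ _ hq'
  have esum : 2 * c * t1 + 2 * c * t2 + 2 * c * t3 = 6 * c * (q 2 * cos c) := by
    rw [ht1def, ht2def, ht3def]; ring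
  have hFq : F q = 1 / 3 * ((arccos t1) ^ 2 + (arccos t2) ^ 2 + (arccos t3) ^ 2) := by
    rw [hF, e1, e2, e3]
  have hsum2 : 3 * (c ^ 2 * sin c) + 2 * c * cos c * (3 - 3 * q 2)
      ≤ ((arccos t1) ^ 2 + (arccos t2) ^ 2 + (arccos t3) ^ 2) * sin c := by
    linarith [k1, k2, k3, esum]
  have h2cc : 0 < 2 * c * cos c := by linarith [mul_pos hc0 hco]
  have h6 : 0 ≤ 2 * c * cos c * (3 - 3 * q 2) :=
    mul_nonneg h2cc.le (by linarith)
  have h7 : 3 * c ^ 2 ≤ (arccos t1) ^ 2 + (arccos t2) ^ 2 + (arccos t3) ^ 2 := by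
    have h71 : (3 * c ^ 2) * sin c
        ≤ ((arccos t1) ^ 2 + (arccos t2) ^ 2 + (arccos t3) ^ 2) * sin c := by linarith
    exact le_of_mul_le_mul_right h71 hs
  constructor
  · rw [hFp, hFq]; linarith
  · intro heq
    rw [hFq, hFp] at heq
    have heq' : (arccos t1) ^ 2 + (arccos t2) ^ 2 + (arccos t3) ^ 2 = 3 * c ^ 2 := by
      linarith
    have hz : ((arccos t1) ^ 2 + (arccos t2) ^ 2 + (arccos t3) ^ 2) * sin c
        = 3 * (c ^ 2 * sin c) := by rw [heq']; ring
    have hle : 2 * c * cos c * (3 - 3 * q 2) ≤ 0 := by linarith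
    have hq2ge : 1 ≤ q 2 := by
      by_contra hlt
      push_neg at hlt
      have h8 : 0 < 2 * c * cos c * (3 - 3 * q 2) :=
        mul_pos h2cc (by linarith)
      linarith
    have hq2 : q 2 = 1 := le_antisymm hq2le hq2ge
    rw [hq2] at hq'
    norm_num at hq'
    have h90 : q 0 ^ 2 = 0 :=
      le_antisymm (by linarith [sq_nonneg (q 1)]) (sq_nonneg _)
    have h91 : q 1 ^ 2 = 0 :=
      le_antisymm (by linarith [sq_nonneg (q 0)]) (sq_nonneg _)
    have hq0 : q 0 = 0 := by
      exact pow_eq_zero_iff (by norm_num : (2:ℕ) ≠ 0) |>.mp h90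
    have hq1 : q 1 = 0 := by
      exact pow_eq_zero_iff (by norm_num : (2:ℕ) ≠ 0) |>.mp h91
    funext i
    fin_cases i <;> simp [hp, hq0, hq1, hq2]
end
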